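/- Let Z be a real antisymmetric n×n matrix with tr(ZᵀZ) = 1, let ν ∈ ℝⁿ be a unit vector, and set Z₀ = (I − ννᵀ)·Z·(I − ννᵀ). Then for every real antisymmetric n×n matrix J with tr(JᵀJ) = 1 one has |tr(Zᵀ·(I − 2ννᵀ)·J)| ≤ √(tr(Z₀ᵀZ₀)). -/
import Mathlib


open Matrix

lemma trace_transpose_mul_eq_sum {n : ℕ} (A B : Matrix (Fin n) (Fin n) ℝ) :
    (Aᵀ * B).trace = ∑ p : Fin n × Fin n, A p.1 p.2 * B p.1 p.2 := by
  simp [Matrix.trace, Matrix.mul_apply, Matrix.diag, Fintype.sum_prod_type]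
  exact Finset.sum_comm

lemma abs_trace_le {n : ℕ} (A B : Matrix (Fin n) (Fin n) ℝ) :
    |(Aᵀ * B).trace| ≤ Real.sqrt ((Aᵀ * A).trace) * Real.sqrt ((Bᵀ * B).trace) := by
  rw [trace_transpose_mul_eq_sum, trace_transpose_mul_eq_sum, trace_transpose_mul_eq_sum]
  have h1 : |∑ p : Fin n × Fin n, A p.1 p.2 * B p.1 p.2|
      = Real.sqrt ((∑ p : Fin n × Fin n, A p.1 p.2 * B p.1 p.2) ^ 2) := by
    rw [Real.sqrt_sq_eq_abs]
  rw [h1]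
  have h2 := Finset.sum_mul_sq_le_sq_mul_sq Finset.univ
    (fun p : Fin n × Fin n => A p.1 p.2) (fun p : Fin n × Fin n => B p.1 p.2)
  calc Real.sqrt ((∑ p : Fin n × Fin n, A p.1 p.2 * B p.1 p.2) ^ 2)
      ≤ Real.sqrt ((∑ p : Fin n × Fin n, A p.1 p.2 ^ 2) *
          ∑ p : Fin n × Fin n, B p.1 p.2 ^ 2) := Real.sqrt_le_sqrt h2
    _ = Real.sqrt (∑ p : Fin n × Fin n, A p.1 p.2 * A p.1 p.2) *
        Real.sqrt (∑ p : Fin n × Fin n, B p.1 p.2 * B p.1 p.2) := by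
        rw [Real.sqrt_mul (Finset.sum_nonneg fun p _ => sq_nonneg _)]
        simp [sq]

/-- Inequality (47) of the paper: for antisymmetric `Z`, `J` normalized in
Frobenius norm, a unit vector `ν`, and `Z₀ = (I − ννᵀ) Z (I − ννᵀ)`,
`|tr(Zᵀ (I − 2ννᵀ) J)| ≤ √(tr(Z₀ᵀ Z₀))`. -/
theorem stmt_7 (n : ℕ) (Z J : Matrix (Fin n) (Fin n) ℝ) (ν : Fin n → ℝ)
    (hZ : Zᵀ = -Z) (hZnorm : (Zᵀ * Z).trace = 1)
    (hν : ∑ i, ν i ^ 2 = 1)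
    (hJ : Jᵀ = -J) (hJnorm : (Jᵀ * J).trace = 1) :
    let Z₀ : Matrix (Fin n) (Fin n) ℝ :=
      (1 - vecMulVec ν ν) * Z * (1 - vecMulVec ν ν)
    |(Zᵀ * (1 - (2 : ℝ) • vecMulVec ν ν) * J).trace| ≤ Real.sqrt ((Z₀ᵀ * Z₀).trace) := by
  intro Z₀
  set P : Matrix (Fin n) (Fin n) ℝ := vecMulVec ν ν with hP
  have hPt : Pᵀ = P := by
    ext i j; simp [hP, Matrix.vecMulVec_apply, mul_comm]
  -- νᵀ Z ν = 0
  have hc : (∑ k, ∑ l, ν k * Z k l * ν l) = 0 := by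
    have h1 : (∑ k, ∑ l, ν k * Z k l * ν l) = ∑ k, ∑ l, ν l * Z l k * ν k :=
      Finset.sum_comm
    have h2 : ∀ k l, ν l * Z l k * ν k = -(ν k * Z k l * ν l) := by
      intro k l
      have : Z l k = -Z k l := by
        have := congrFun (congrFun hZ k) l
        simpa [Matrix.transpose_apply] using this
      rw [this]; ring
    have h3 : (∑ k, ∑ l, ν k * Z k l * ν l) = -(∑ k, ∑ l, ν k * Z k l * ν l) := by
      nth_rewrite 1 [h1]
      rw [← Finset.sum_neg_distrib]
      refine Finset.sum_congr rfl fun k _ => ?_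
      rw [← Finset.sum_neg_distrib]
      exact Finset.sum_congr rfl fun l _ => h2 k l
    linarith
  -- P * Z * P = 0
  have hPZP : P * Z * P = 0 := by
    ext i j
    simp only [Matrix.mul_apply, hP, Matrix.vecMulVec_apply, Matrix.zero_apply]
    have heq : (∑ l, (∑ k, ν i * ν k * Z k l) * (ν l * ν j))
        = ν i * ν j * ∑ l, ∑ k, ν k * Z k l * ν l := by
      rw [Finset.mul_sum]
      refine Finset.sum_congr rfl fun l _ => ?_
      rw [Finset.sum_mul, Finset.mul_sum]
      refine Finset.sum_congr rfl fun k _ => ?_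
      ring
    have hc' : (∑ l, ∑ k, ν k * Z k l * ν l) = 0 := Finset.sum_comm.trans hc
    rw [heq, hc', mul_zero]
  -- Z₀ = Z - P*Z - Z*P
  have hZ₀ : Z₀ = Z - P * Z - Z * P := by
    show (1 - P) * Z * (1 - P) = Z - P * Z - Z * P
    have : (1 - P) * Z * (1 - P) = Z - P * Z - Z * P + P * Z * P := by
      noncomm_ring
    rw [this, hPZP, add_zero]
  -- trace identity
  have hZZ : Z = -Zᵀ := by rw [hZ, neg_neg]
  have htr1 : (P * Zᵀ * J).trace = (Zᵀ * P * J).trace := by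
    have h1 : (P * Zᵀ * J).trace = ((P * Zᵀ * J)ᵀ).trace := (Matrix.trace_transpose _).symm
    rw [h1]
    have h2 : (P * Zᵀ * J)ᵀ = Jᵀ * Z * Pᵀ := by
      rw [Matrix.transpose_mul, Matrix.transpose_mul, Matrix.transpose_transpose,
        mul_assoc]
    rw [h2, hPt, hJ]
    have h3 : -J * Z * P = J * Zᵀ * P := by
      rw [hZ]; simp [Matrix.neg_mul, Matrix.mul_neg, neg_neg]
    rw [h3]
    exact (Matrix.trace_mul_cycle Zᵀ P J).symm
  have key : (Zᵀ * (1 - (2 : ℝ) • P) * J).trace = (Z₀ᵀ * J).trace := by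
    have hZ₀t : Z₀ᵀ = Zᵀ - Zᵀ * P - P * Zᵀ := by
      rw [hZ₀, Matrix.transpose_sub, Matrix.transpose_sub, Matrix.transpose_mul,
        Matrix.transpose_mul, hPt]
    have hL : Zᵀ * (1 - (2 : ℝ) • P) * J = Zᵀ * J - (2:ℝ) • (Zᵀ * P * J) := by
      rw [mul_sub, Matrix.mul_smul, sub_mul, Matrix.smul_mul, mul_one]
    have hR : Z₀ᵀ * J = Zᵀ * J - Zᵀ * P * J - P * Zᵀ * J := by
      rw [hZ₀t]; noncomm_ring
    rw [hL, hR]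
    rw [Matrix.trace_sub, Matrix.trace_smul, Matrix.trace_sub, Matrix.trace_sub, htr1,
      smul_eq_mul]
    ring
  rw [key]
  calc |(Z₀ᵀ * J).trace| ≤ Real.sqrt ((Z₀ᵀ * Z₀).trace) * Real.sqrt ((Jᵀ * J).trace) :=
        abs_trace_le Z₀ J
    _ = Real.sqrt ((Z₀ᵀ * Z₀).trace) := by rw [hJnorm, Real.sqrt_one, mul_one]
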